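/- Suppose the endpoint assumption holds for σ(F) and for the trivial σ-algebra, and suppose F is tail auto-calibrated for Y (i.e. tail σ(F)-calibrated) with the defining convergence holding in L^∞: for every u ∈ [0,1], the essential supremum of |P(Z_F^{(t)} ≤ u, Y > t | F)/(1 − F(t)) − u| tends to 0 as t → x_Y. Then F is probabilistically tail calibrated for Y: E[1 − F(t)] > 0 for all t < x_Y and, for every u ∈ [0,1], P(Z_F^{(t)} ≤ u, Y > t)/E[1 − F(t)] → u as t → x_Y. -/

import Mathlib

open MeasureTheory ProbabilityTheory Filter Set Topology

noncomputable section

/-- Conditional probability of a set given a sub-σ-algebra, as a real-valued function. -/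
def condProb {Ω : Type*} {m0 : MeasurableSpace Ω} (μ : Measure Ω) (m : MeasurableSpace Ω)
    (A : Set Ω) : Ω → ℝ :=
  μ[A.indicator (fun _ => (1 : ℝ))|m]

/-- The conditional forecast excess distribution `F_t`. -/
def excessCdf (F : ℝ → ℝ) (t x : ℝ) : ℝ :=
  if F t < 1 then (F (x + t) - F t) / (1 - F t) else 1

/-- The excess probability integral transform `Z_F^{(t)}`. -/
def excessPIT {Ω : Type*} (F : Ω → ℝ → ℝ) (Y : Ω → ℝ) (t : ℝ) (ω : Ω) : ℝ :=
  excessCdf (F ω) t (Y ω - t)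

/-- Upper endpoint `x_Y = sup {x : P(Y ≤ x) < 1}` of the outcome, in `EReal`. -/
def upperEndpoint {Ω : Type*} {mΩ : MeasurableSpace Ω} (μ : Measure Ω) (Y : Ω → ℝ) : EReal :=
  sSup (Real.toEReal '' {x : ℝ | μ {ω | Y ω ≤ x} < 1})

/-- Upper endpoint of a (deterministic) cdf. -/
def cdfEndpoint (F : ℝ → ℝ) : EReal :=
  sSup (Real.toEReal '' {x : ℝ | F x < 1})

/-- The filter of real `t` tending to an extended-real endpoint `e` from below. -/
def toEndpoint (e : EReal) : Filter ℝ :=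
  Filter.comap Real.toEReal (𝓝[<] e)

/-- `F` is a random cdf: measurable in `ω`, and almost surely a continuous cdf. -/
def IsRandomCdf {Ω : Type*} {mΩ : MeasurableSpace Ω} (μ : Measure Ω) (F : Ω → ℝ → ℝ) : Prop :=
  (∀ x : ℝ, Measurable fun ω => F ω x) ∧
    ∀ᵐ ω ∂μ, Monotone (F ω) ∧ Continuous (F ω) ∧
      Tendsto (F ω) atTop (𝓝 1) ∧ Tendsto (F ω) atBot (𝓝 0)

/-- The endpoint assumption for a sub-σ-algebra `m`: the conditional distribution of `Y`
given `m` has (non-random) upper endpoint `x_Y`. -/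
def EndpointAssumption {Ω : Type*} {m0 : MeasurableSpace Ω} (μ : Measure Ω)
    (m : MeasurableSpace Ω) (Y : Ω → ℝ) : Prop :=
  (∀ t : ℝ, (t : EReal) < upperEndpoint μ Y →
      ∀ᵐ ω ∂μ, 0 < condProb μ m {ω' | t < Y ω'} ω) ∧
    ∀ᵐ ω ∂μ, condProb μ m {ω' | upperEndpoint μ Y < (Y ω' : EReal)} ω = 0

/-- `F` is tail `m`-calibrated for `Y`. -/
def TailCalibrated {Ω : Type*} {m0 : MeasurableSpace Ω} (μ : Measure Ω)
    (m : MeasurableSpace Ω) (F : Ω → ℝ → ℝ) (Y : Ω → ℝ) : Prop :=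
  (∀ t : ℝ, (t : EReal) < upperEndpoint μ Y →
      ∀ᵐ ω ∂μ, 0 < (μ[fun ω' => 1 - F ω' t|m]) ω) ∧
    ∀ u ∈ Icc (0 : ℝ) 1, ∀ᵐ ω ∂μ,
      Tendsto (fun t : ℝ =>
          condProb μ m {ω' | excessPIT F Y t ω' ≤ u ∧ t < Y ω'} ω /
            (μ[fun ω' => 1 - F ω' t|m]) ω)
        (toEndpoint (upperEndpoint μ Y)) (𝓝 u)

/-- `F` is probabilistically tail calibrated for `Y`. -/
def ProbTailCalibrated {Ω : Type*} {mΩ : MeasurableSpace Ω} (μ : Measure Ω)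
    (F : Ω → ℝ → ℝ) (Y : Ω → ℝ) : Prop :=
  (∀ t : ℝ, (t : EReal) < upperEndpoint μ Y → 0 < ∫ ω, (1 - F ω t) ∂μ) ∧
    ∀ u ∈ Icc (0 : ℝ) 1,
      Tendsto (fun t : ℝ =>
          (μ {ω | excessPIT F Y t ω ≤ u ∧ t < Y ω}).toReal / ∫ ω, (1 - F ω t) ∂μ)
        (toEndpoint (upperEndpoint μ Y)) (𝓝 u)

/-- `F` is marginally tail calibrated for `Y`. -/
def MargTailCalibrated {Ω : Type*} {mΩ : MeasurableSpace Ω} (μ : Measure Ω)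
    (F : Ω → ℝ → ℝ) (Y : Ω → ℝ) : Prop :=
  (∀ t : ℝ, (t : EReal) < upperEndpoint μ Y → 0 < ∫ ω, (1 - F ω t) ∂μ) ∧
    Tendsto (fun t : ℝ =>
        ⨆ x : Ici (0 : ℝ),
          |(μ {ω | t < Y ω ∧ Y ω ≤ t + (x : ℝ)}).toReal / (∫ ω, (1 - F ω t) ∂μ) -
            (∫ ω in {ω' | t < Y ω'}, excessCdf (F ω) t (x : ℝ) ∂μ) /
              (μ {ω' | t < Y ω'}).toReal|)
      (toEndpoint (upperEndpoint μ Y)) (𝓝 0)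

/-- Generalized Pareto survival function `(1 + ξ x)₊^(-1/ξ)` with unit scale and shape `ξ`,
interpreted as `exp (-x)` when `ξ = 0`. -/
def gpdSurv (ξ x : ℝ) : ℝ :=
  if ξ = 0 then Real.exp (-x) else (max (1 + ξ * x) 0) ^ (-(1 : ℝ) / ξ)

/-- The σ-algebra generated by the random forecast `F`. -/
def sigmaOfForecast {Ω : Type*} (F : Ω → ℝ → ℝ) : MeasurableSpace Ω :=
  MeasurableSpace.comap F inferInstance


open scoped ENNReal NNReal

section Aux

variable {Ω : Type*} {m0 : MeasurableSpace Ω} {μ : Measure Ω}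

/-- A.e., a random cdf takes values in `[0,1]`. -/
lemma isRandomCdf_bounds {F : Ω → ℝ → ℝ} (hF : IsRandomCdf μ F) :
    ∀ᵐ ω ∂μ, ∀ x : ℝ, 0 ≤ F ω x ∧ F ω x ≤ 1 := by
  filter_upwards [hF.2] with ω hω x
  exact ⟨hω.1.le_of_tendsto hω.2.2.2 x, hω.1.ge_of_tendsto hω.2.2.1 x⟩

/-- The evaluation `ω ↦ F ω (Y ω)` is a.e.-measurable. -/
lemma aemeasurable_eval {F : Ω → ℝ → ℝ} {Y : Ω → ℝ} (hY : Measurable Y)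
    (hF : IsRandomCdf μ F) : AEMeasurable (fun ω => F ω (Y ω)) μ := by
  refine ⟨fun ω => ⨅ q : ℚ, if Y ω < (q : ℝ) then F ω q else 1, ?_, ?_⟩
  · exact Measurable.iInf fun q =>
      Measurable.ite (measurableSet_lt hY measurable_const) (hF.1 q) measurable_const
  · filter_upwards [hF.2] with ω hω
    obtain ⟨hmono, hcont, htop, hbot⟩ := hω
    have h01 : ∀ x : ℝ, 0 ≤ F ω x ∧ F ω x ≤ 1 := fun x =>
      ⟨hmono.le_of_tendsto hbot x, hmono.ge_of_tendsto htop x⟩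
    have hbdd : BddBelow (Set.range fun q : ℚ => if Y ω < (q : ℝ) then F ω q else 1) := by
      refine ⟨0, ?_⟩
      rintro x ⟨q, rfl⟩
      dsimp only
      split
      · exact (h01 q).1
      · norm_num
    refine le_antisymm (le_ciInf fun q => ?_) ?_
    · split
      · exact hmono (le_of_lt (by assumption))
      · exact (h01 (Y ω)).2
    · refine le_of_forall_sub_le fun ε hε => ?_
      obtain ⟨δ, hδ, hδε⟩ := Metric.continuous_iff.mp hcont (Y ω) ε hε
      obtain ⟨q, hq1, hq2⟩ := exists_rat_btwn (lt_add_of_pos_right (Y ω) hδ)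
      have hdist : dist (q : ℝ) (Y ω) < δ := by
        rw [Real.dist_eq, abs_of_pos (by linarith)]
        linarith
      have hFq : F ω q < F ω (Y ω) + ε := by
        have h := hδε q hdist
        rw [Real.dist_eq] at h
        have h2 := abs_lt.mp h
        linarith [h2.1, h2.2]
      have hle : (⨅ q : ℚ, if Y ω < (q : ℝ) then F ω q else 1) ≤ F ω q := by
        have h := ciInf_le hbdd q
        simpa [if_pos hq1] using h
      linarith

/-- The excess PIT is a.e.-measurable. -/
lemma aemeasurable_excessPIT {F : Ω → ℝ → ℝ} {Y : Ω → ℝ} (hY : Measurable Y)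
    (hF : IsRandomCdf μ F) (t : ℝ) : AEMeasurable (excessPIT F Y t) μ := by
  obtain ⟨G, hGmeas, hGae⟩ := aemeasurable_eval hY hF
  refine ⟨fun ω => if F ω t < 1 then (G ω - F ω t) / (1 - F ω t) else 1, ?_, ?_⟩
  · exact Measurable.ite (measurableSet_lt (hF.1 t) measurable_const)
      ((hGmeas.sub (hF.1 t)).div (measurable_const.sub (hF.1 t))) measurable_const
  · filter_upwards [hGae] with ω hω
    simp only [excessPIT, excessCdf, sub_add_cancel, hω]

end Aux

/-- tail auto-calibration with convergence in `L^∞` implies probabilistic tail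
calibration. -/
theorem tailAuto_implies_probTail
    {Ω : Type*} {m0 : MeasurableSpace Ω} (μ : Measure Ω) [IsProbabilityMeasure μ]
    (F : Ω → ℝ → ℝ) (Y : Ω → ℝ) (hY : Measurable Y)
    (hF : IsRandomCdf μ F) (hσF : sigmaOfForecast F ≤ m0)
    (hEndF : EndpointAssumption μ (sigmaOfForecast F) Y)
    (hEndTriv : EndpointAssumption μ (⊥ : MeasurableSpace Ω) Y)
    (hpos : ∀ t : ℝ, (t : EReal) < upperEndpoint μ Y → ∀ᵐ ω ∂μ, 0 < 1 - F ω t)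
    (hcal : ∀ u ∈ Icc (0 : ℝ) 1, ∀ᵐ ω ∂μ,
      Tendsto (fun t : ℝ =>
          condProb μ (sigmaOfForecast F) {ω' | excessPIT F Y t ω' ≤ u ∧ t < Y ω'} ω /
            (1 - F ω t))
        (toEndpoint (upperEndpoint μ Y)) (𝓝 u))
    (hLinf : ∀ u ∈ Icc (0 : ℝ) 1,
      Tendsto (fun t : ℝ =>
          eLpNorm (fun ω =>
              condProb μ (sigmaOfForecast F) {ω' | excessPIT F Y t ω' ≤ u ∧ t < Y ω'} ω /
                (1 - F ω t) - u) ⊤ μ)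
        (toEndpoint (upperEndpoint μ Y)) (𝓝 0)) :
    ProbTailCalibrated μ F Y := by
  have hFbd := isRandomCdf_bounds hF
  have hint1F : ∀ t : ℝ, Integrable (fun ω => 1 - F ω t) μ := by
    intro t
    refine (integrable_const (1 : ℝ)).mono'
      ((measurable_const.sub (hF.1 t)).aestronglyMeasurable) ?_
    filter_upwards [hFbd] with ω hω
    have h := hω t
    rw [Real.norm_eq_abs, abs_le]
    constructor <;> linarith [h.1, h.2]
  -- positivity of the denominator
  have hIpos : ∀ t : ℝ, (t : EReal) < upperEndpoint μ Y → 0 < ∫ ω, (1 - F ω t) ∂μ := by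
    intro t ht
    have hp := hpos t ht
    rw [integral_pos_iff_support_of_nonneg_ae (hp.mono fun ω hω => hω.le) (hint1F t)]
    have hnull : μ (Function.support fun ω => 1 - F ω t)ᶜ = 0 := by
      rw [← le_zero_iff]
      refine le_trans (measure_mono ?_) (le_of_eq (ae_iff.mp hp))
      intro ω hω
      simp only [Function.mem_support, not_not, Set.mem_compl_iff] at hω
      simp only [Set.mem_setOf_eq, not_lt]
      linarith
    by_contra hcon
    push_neg at hcon
    have h0 : μ (Function.support fun ω => 1 - F ω t) = 0 := le_antisymm hcon zero_le
    have hle0 : μ Set.univ ≤ 0 := by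
      calc μ Set.univ ≤ μ (Function.support fun ω => 1 - F ω t)
            + μ (Function.support fun ω => 1 - F ω t)ᶜ := by
              rw [← Set.union_compl_self (Function.support fun ω => 1 - F ω t)]
              exact measure_union_le _ _
        _ = 0 := by rw [h0, hnull, add_zero]
    simp [measure_univ] at hle0
  refine ⟨hIpos, ?_⟩
  intro u hu
  -- the key identity: P(A_t) = ∫ condProb
  have hPA : ∀ t : ℝ,
      (μ {ω | excessPIT F Y t ω ≤ u ∧ t < Y ω}).toReal =
        ∫ ω, condProb μ (sigmaOfForecast F) {ω' | excessPIT F Y t ω' ≤ u ∧ t < Y ω'} ω ∂μ := by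
    intro t
    have hAnull : NullMeasurableSet {ω | excessPIT F Y t ω ≤ u ∧ t < Y ω} μ := by
      have h1 : NullMeasurableSet (excessPIT F Y t ⁻¹' Set.Iic u) μ :=
        (aemeasurable_excessPIT hY hF t).nullMeasurable measurableSet_Iic
      have h2 : NullMeasurableSet (Y ⁻¹' Set.Ioi t) μ :=
        (hY measurableSet_Ioi).nullMeasurableSet
      exact h1.inter h2
    have hAB := hAnull.toMeasurable_ae_eq
    have hindAB : MeasureTheory.toMeasurable μ {ω | excessPIT F Y t ω ≤ u ∧ t < Y ω}
          |>.indicator (fun _ => (1 : ℝ)) =ᵐ[μ]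
        Set.indicator {ω | excessPIT F Y t ω ≤ u ∧ t < Y ω} (fun _ => (1 : ℝ)) :=
      indicator_ae_eq_of_ae_eq_set hAB
    calc (μ {ω | excessPIT F Y t ω ≤ u ∧ t < Y ω}).toReal
        = (μ (MeasureTheory.toMeasurable μ {ω | excessPIT F Y t ω ≤ u ∧ t < Y ω})).toReal := by
          rw [measure_congr hAB]
      _ = ∫ ω, (MeasureTheory.toMeasurable μ {ω | excessPIT F Y t ω ≤ u ∧ t < Y ω}).indicator
            (fun _ => (1 : ℝ)) ω ∂μ :=
          (integral_indicator_one (measurableSet_toMeasurable μ _)).symm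
      _ = ∫ ω, Set.indicator {ω | excessPIT F Y t ω ≤ u ∧ t < Y ω} (fun _ => (1 : ℝ)) ω ∂μ :=
          integral_congr_ae hindAB
      _ = ∫ ω, (μ[Set.indicator {ω | excessPIT F Y t ω ≤ u ∧ t < Y ω}
            (fun _ => (1 : ℝ))|sigmaOfForecast F]) ω ∂μ := (integral_condExp hσF).symm
      _ = ∫ ω, condProb μ (sigmaOfForecast F) {ω' | excessPIT F Y t ω' ≤ u ∧ t < Y ω'} ω ∂μ := rfl
  -- main estimate
  have hmain : ∀ t : ℝ, (t : EReal) < upperEndpoint μ Y →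
      eLpNorm (fun ω => condProb μ (sigmaOfForecast F)
          {ω' | excessPIT F Y t ω' ≤ u ∧ t < Y ω'} ω / (1 - F ω t) - u) ⊤ μ < ⊤ →
      |(μ {ω | excessPIT F Y t ω ≤ u ∧ t < Y ω}).toReal / (∫ ω, (1 - F ω t) ∂μ) - u| ≤
        (eLpNorm (fun ω => condProb μ (sigmaOfForecast F)
          {ω' | excessPIT F Y t ω' ≤ u ∧ t < Y ω'} ω / (1 - F ω t) - u) ⊤ μ).toReal := by
    intro t ht hfin
    set c : Ω → ℝ := condProb μ (sigmaOfForecast F) {ω' | excessPIT F Y t ω' ≤ u ∧ t < Y ω'}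
      with hc
    set f : Ω → ℝ := fun ω => c ω / (1 - F ω t) - u with hfdef
    set ε : ℝ := (eLpNorm f ⊤ μ).toReal with hε
    set I : ℝ := ∫ ω, (1 - F ω t) ∂μ with hI
    have hI0 : 0 < I := hIpos t ht
    have haebound : ∀ᵐ ω ∂μ, |f ω| ≤ ε := by
      filter_upwards [MeasureTheory.ae_le_eLpNormEssSup (f := f) (μ := μ)] with ω hω
      have h : ((‖f ω‖₊ : ℝ≥0∞)).toReal ≤ (eLpNormEssSup f μ).toReal := by
        refine ENNReal.toReal_mono ?_ hω
        rw [← MeasureTheory.eLpNorm_exponent_top]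
        exact hfin.ne
      simpa [← MeasureTheory.eLpNorm_exponent_top, Real.norm_eq_abs] using h
    have hcint : Integrable c μ := integrable_condExp
    have hkey : |∫ ω, (c ω - u * (1 - F ω t)) ∂μ| ≤ ε * I := by
      have hb : ∀ᵐ ω ∂μ, |c ω - u * (1 - F ω t)| ≤ ε * (1 - F ω t) := by
        filter_upwards [hpos t ht, haebound] with ω h1 h2
        have heq : c ω - u * (1 - F ω t) = f ω * (1 - F ω t) := by
          rw [hfdef]
          field_simp
        rw [heq, abs_mul, abs_of_pos h1]
        exact mul_le_mul_of_nonneg_right h2 h1.le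
      calc |∫ ω, (c ω - u * (1 - F ω t)) ∂μ| ≤ ∫ ω, |c ω - u * (1 - F ω t)| ∂μ := by
            simpa [Real.norm_eq_abs] using
              norm_integral_le_integral_norm (μ := μ) (fun ω => c ω - u * (1 - F ω t))
        _ ≤ ∫ ω, ε * (1 - F ω t) ∂μ :=
            integral_mono_ae (hcint.sub ((hint1F t).const_mul u)).abs
              ((hint1F t).const_mul ε) hb
        _ = ε * I := by rw [integral_const_mul]
    have hsub : ∫ ω, (c ω - u * (1 - F ω t)) ∂μ = (∫ ω, c ω ∂μ) - u * I := by
      rw [integral_sub hcint ((hint1F t).const_mul u), integral_const_mul]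
    have hnum : |(μ {ω | excessPIT F Y t ω ≤ u ∧ t < Y ω}).toReal - u * I| ≤ ε * I := by
      rw [hPA t, ← hc]
      rw [hsub] at hkey
      exact hkey
    have hrw : (μ {ω | excessPIT F Y t ω ≤ u ∧ t < Y ω}).toReal / I - u =
        ((μ {ω | excessPIT F Y t ω ≤ u ∧ t < Y ω}).toReal - u * I) / I := by
      field_simp
    rw [hrw, abs_div, abs_of_pos hI0, div_le_iff₀ hI0]
    exact hnum
  -- conclusion by squeezing
  have hev_lt : ∀ᶠ t : ℝ in toEndpoint (upperEndpoint μ Y), (t : EReal) < upperEndpoint μ Y := by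
    have h : Set.Iio (upperEndpoint μ Y) ∈ 𝓝[<] upperEndpoint μ Y := self_mem_nhdsWithin
    exact Filter.preimage_mem_comap h
  have hL := hLinf u hu
  have hev_fin : ∀ᶠ t : ℝ in toEndpoint (upperEndpoint μ Y),
      eLpNorm (fun ω => condProb μ (sigmaOfForecast F)
        {ω' | excessPIT F Y t ω' ≤ u ∧ t < Y ω'} ω / (1 - F ω t) - u) ⊤ μ < ⊤ :=
    hL.eventually_lt_const (by simp)
  have hεto : Tendsto (fun t : ℝ =>
      (eLpNorm (fun ω => condProb μ (sigmaOfForecast F)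
        {ω' | excessPIT F Y t ω' ≤ u ∧ t < Y ω'} ω / (1 - F ω t) - u) ⊤ μ).toReal)
      (toEndpoint (upperEndpoint μ Y)) (𝓝 0) := by
    have h : Tendsto ENNReal.toReal (𝓝 (0 : ℝ≥0∞)) (𝓝 (0 : ℝ≥0∞).toReal) :=
      ENNReal.tendsto_toReal (by simp)
    simpa [Function.comp_def] using h.comp hL
  have hzero : Tendsto (fun t : ℝ =>
      (μ {ω | excessPIT F Y t ω ≤ u ∧ t < Y ω}).toReal / (∫ ω, (1 - F ω t) ∂μ) - u)
      (toEndpoint (upperEndpoint μ Y)) (𝓝 0) := by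
    refine squeeze_zero_norm' ?_ hεto
    filter_upwards [hev_lt, hev_fin] with t ht htfin
    simpa [Real.norm_eq_abs] using hmain t ht htfin
  have hfinal := hzero.add_const u
  simpa using hfinal
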